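/- arXiv:2205.11883 — 2 statements merged into one kernel-verified Lean document; each statement's English description precedes it below -/
import Mathlib

section
/- Let M be a full subcategory of Mod-R closed under submodules and let M ∈ M. Then there exists a left almost split morphism f : M → M̄ in M that is not a monomorphism if and only if there exists a left almost split morphism g : M → M̄' in M that is an epimorphism. Moreover, every strong left almost split morphism in M with domain M is either a monomorphism or an epimorphism. -/
open CategoryTheory Limits

universe u

namespace Paper

variable {R : Type u} [Ring R]

/-- `f` is a left almost split morphism in the full subcategory of objects satisfying `P`. -/
def LeftAlmostSplitIn {C : Type*} [Category C] (P : C → Prop) {X Y : C} (f : X ⟶ Y) :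
    Prop :=
  ¬ IsSplitMono f ∧
    ∀ ⦃Z : C⦄, P Z → ∀ g : X ⟶ Z, ¬ IsSplitMono g → ∃ h : Y ⟶ Z, f ≫ h = g

/-- A strong left almost split morphism: the factorization is moreover unique. -/
def StrongLeftAlmostSplitIn {C : Type*} [Category C] (P : C → Prop) {X Y : C}
    (f : X ⟶ Y) : Prop :=
  ¬ IsSplitMono f ∧
    ∀ ⦃Z : C⦄, P Z → ∀ g : X ⟶ Z, ¬ IsSplitMono g → ∃! h : Y ⟶ Z, f ≫ h = g

theorem las_mono_or_epi (Mcl : Set (ModuleCat.{u} R))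
    (hsub : ∀ {X Y : ModuleCat.{u} R}, X ∈ Mcl → ∀ f : Y ⟶ X, Mono f → Y ∈ Mcl)
    (M : ModuleCat.{u} R) (hM : M ∈ Mcl) :
    ((∃ (Mb : ModuleCat.{u} R) (f : M ⟶ Mb), Mb ∈ Mcl ∧
        LeftAlmostSplitIn (· ∈ Mcl) f ∧ ¬ Mono f) ↔
      (∃ (Mb : ModuleCat.{u} R) (g : M ⟶ Mb), Mb ∈ Mcl ∧
        LeftAlmostSplitIn (· ∈ Mcl) g ∧ Epi g)) ∧
    (∀ (Mb : ModuleCat.{u} R) (f : M ⟶ Mb), Mb ∈ Mcl →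
      StrongLeftAlmostSplitIn (· ∈ Mcl) f → Mono f ∨ Epi f) := by
  constructor
  · constructor
    · -- forward: replace f by its corestriction onto its image
      rintro ⟨Mb, f, hMb, ⟨hns, hfac⟩, hnm⟩
      let I : ModuleCat.{u} R := ModuleCat.of R (LinearMap.range f.hom)
      let g : M ⟶ I := ModuleCat.ofHom f.hom.rangeRestrict
      let i : I ⟶ Mb := ModuleCat.ofHom (LinearMap.range f.hom).subtype
      have hgi : g ≫ i = f := by ext x; rfl
      have himono : Mono i :=
        (ModuleCat.mono_iff_injective i).2 (Submodule.injective_subtype _)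
      have hI : I ∈ Mcl := hsub hMb i himono
      have hgepi : Epi g :=
        (ModuleCat.epi_iff_surjective g).2 (LinearMap.surjective_rangeRestrict f.hom)
      refine ⟨I, g, hI, ⟨?_, ?_⟩, hgepi⟩
      · intro hsg
        apply hnm
        rw [← hgi]
        have : Mono g := inferInstance
        exact mono_comp g i
      · intro Z hZ p hp
        obtain ⟨h, hh⟩ := hfac hZ p hp
        exact ⟨i ≫ h, by rw [← Category.assoc, hgi, hh]⟩
    · -- backward: g left almost split and epi is already not mono
      rintro ⟨Mb, g, hMb, ⟨hns, hfac⟩, hepi⟩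
      refine ⟨Mb, g, hMb, ⟨hns, hfac⟩, ?_⟩
      intro hmono
      exact hns (by have : IsIso g := isIso_of_mono_of_epi g; infer_instance)
  · -- strong left almost split ⇒ mono or epi
    intro Mb f hMb ⟨hns, hfac⟩
    by_cases hmono : Mono f
    · exact Or.inl hmono
    · right
      let I : ModuleCat.{u} R := ModuleCat.of R (LinearMap.range f.hom)
      let g : M ⟶ I := ModuleCat.ofHom f.hom.rangeRestrict
      let i : I ⟶ Mb := ModuleCat.ofHom (LinearMap.range f.hom).subtype
      have hgi : g ≫ i = f := by ext x; rfl
      have himono : Mono i :=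
        (ModuleCat.mono_iff_injective i).2 (Submodule.injective_subtype _)
      have hI : I ∈ Mcl := hsub hMb i himono
      have hgepi : Epi g :=
        (ModuleCat.epi_iff_surjective g).2 (LinearMap.surjective_rangeRestrict f.hom)
      -- g is not a split mono, else f would be mono
      have hgns : ¬ IsSplitMono g := by
        intro hsg
        apply hmono
        rw [← hgi]
        have : Mono g := inferInstance
        exact mono_comp g i
      obtain ⟨h, hh, huniq⟩ := hfac hI g hgns
      -- f ≫ (h ≫ i) = f and f ≫ 𝟙 = f; uniqueness applied to f itself
      obtain ⟨h', hh', huniq'⟩ := hfac hMb f hns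
      have e1 : h ≫ i = h' := huniq' _ (by show f ≫ h ≫ i = f; rw [← Category.assoc, hh, hgi])
      have e2 : 𝟙 Mb = h' := huniq' _ (Category.comp_id f)
      have : h ≫ i = 𝟙 Mb := e1.trans e2.symm
      have hiepi : Epi i := epi_of_epi_fac this
      rw [← hgi]
      exact epi_comp g i

end Paper
end

section
/- Let (T, F) be a hereditary torsion pair in Mod-R, i.e., a torsion pair whose torsion class T is closed under submodules. Then every torsion-free, almost torsion module F₀ ∈ F is uniform: for any two nonzero submodules M₁, M₂ of F₀ one has M₁ ∩ M₂ ≠ 0. Consequently the injective envelope E(F₀) is indecomposable. -/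
open CategoryTheory Limits

universe u

namespace Paper

variable {R : Type u} [Ring R]

/-- A torsion pair `(T, F)` in the category of `R`-modules: Hom(T, F) = 0 and every
module fits in a short exact sequence with torsion kernel and torsion-free cokernel. -/
structure TorsionPair (R : Type u) [Ring R] where
  tors : Set (ModuleCat.{u} R)
  free : Set (ModuleCat.{u} R)
  isoClosed_tors : ∀ {X Y : ModuleCat.{u} R}, (X ≅ Y) → X ∈ tors → Y ∈ tors
  isoClosed_free : ∀ {X Y : ModuleCat.{u} R}, (X ≅ Y) → X ∈ free → Y ∈ free
  hom_vanish : ∀ {T F : ModuleCat.{u} R}, T ∈ tors → F ∈ free → ∀ f : T ⟶ F, f = 0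
  exists_ses : ∀ X : ModuleCat.{u} R, ∃ (A B : ModuleCat.{u} R) (i : A ⟶ X) (p : X ⟶ B)
    (w : i ≫ p = 0), A ∈ tors ∧ B ∈ free ∧ (ShortComplex.mk i p w).ShortExact

/-- A nonzero module is almost torsion-free if every proper submodule is torsion-free
(ATF1) and every short exact sequence `0 → A → B → T₀ → 0` with `B` torsion has `A`
torsion (ATF2). -/
def AlmostTorsionFree (tors free : Set (ModuleCat.{u} R)) (T₀ : ModuleCat.{u} R) : Prop :=
  Nontrivial T₀ ∧
  (∀ N : Submodule R T₀, N ≠ ⊤ → ModuleCat.of R N ∈ free) ∧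
  (∀ (A B : ModuleCat.{u} R) (i : A ⟶ B) (p : B ⟶ T₀) (w : i ≫ p = 0),
    (ShortComplex.mk i p w).ShortExact → B ∈ tors → A ∈ tors)

/-- A nonzero module is almost torsion if every proper quotient is torsion (AT1) and
every short exact sequence `0 → F₀ → A → B → 0` with `A` torsion-free has `B`
torsion-free (AT2). -/
def AlmostTorsion (tors free : Set (ModuleCat.{u} R)) (F₀ : ModuleCat.{u} R) : Prop :=
  Nontrivial F₀ ∧
  (∀ N : Submodule R F₀, N ≠ ⊥ → ModuleCat.of R (F₀ ⧸ N) ∈ tors) ∧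
  (∀ (A B : ModuleCat.{u} R) (i : F₀ ⟶ A) (p : A ⟶ B) (w : i ≫ p = 0),
    (ShortComplex.mk i p w).ShortExact → A ∈ free → B ∈ free)

/-- An injective envelope: an essential monomorphism into an injective object. -/
def IsInjectiveEnvelope {C : Type*} [Category C] {S E : C} (i : S ⟶ E) : Prop :=
  Injective E ∧ Mono i ∧ ∀ ⦃Z : C⦄ (g : E ⟶ Z), Mono (i ≫ g) → Mono g

theorem hereditary_almostTorsion_uniform (τ : TorsionPair R)
    (hher : ∀ {X Y : ModuleCat.{u} R}, X ∈ τ.tors → ∀ f : Y ⟶ X, Mono f → Y ∈ τ.tors)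
    (F₀ : ModuleCat.{u} R) (hF₀ : F₀ ∈ τ.free)
    (hat : AlmostTorsion τ.tors τ.free F₀) :
    (∀ M₁ M₂ : Submodule R F₀, M₁ ≠ ⊥ → M₂ ≠ ⊥ → M₁ ⊓ M₂ ≠ ⊥) ∧
    (∀ (E : ModuleCat.{u} R) (i : F₀ ⟶ E), IsInjectiveEnvelope i →
      ∀ M₁ M₂ : Submodule R E, IsCompl M₁ M₂ → M₁ = ⊥ ∨ M₂ = ⊥) := by
  obtain ⟨hnt, hAT1, hAT2⟩ := hat
  have uniform : ∀ M₁ M₂ : Submodule R F₀, M₁ ≠ ⊥ → M₂ ≠ ⊥ → M₁ ⊓ M₂ ≠ ⊥ := by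
    intro M₁ M₂ h1 h2 hinter
    -- F₀ / M₂ is torsion
    have hq : ModuleCat.of R (F₀ ⧸ M₂) ∈ τ.tors := hAT1 M₂ h2
    -- M₁ embeds into F₀ / M₂
    let f : ModuleCat.of R M₁ ⟶ ModuleCat.of R (F₀ ⧸ M₂) :=
      ModuleCat.ofHom ((Submodule.mkQ M₂).comp M₁.subtype)
    have hmono : Mono f := by
      rw [ModuleCat.mono_iff_injective]
      intro x y hxy
      have hxy' : Submodule.Quotient.mk (p := M₂) (M₁.subtype x) =
          Submodule.Quotient.mk (M₁.subtype y) := hxy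
      rw [Submodule.Quotient.eq] at hxy'
      have hx' : M₁.subtype x - M₁.subtype y ∈ M₁ ⊓ M₂ :=
        ⟨sub_mem (Submodule.coe_mem x) (Submodule.coe_mem y), hxy'⟩
      rw [hinter, Submodule.mem_bot, sub_eq_zero] at hx'
      exact Subtype.ext hx'
    have hM₁tors : ModuleCat.of R M₁ ∈ τ.tors := hher hq f hmono
    -- inclusion M₁ → F₀ vanishes, so M₁ = ⊥
    have hzero : (ModuleCat.ofHom M₁.subtype : ModuleCat.of R M₁ ⟶ F₀) = 0 :=
      τ.hom_vanish hM₁tors hF₀ _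
    apply h1
    ext x
    simp only [Submodule.mem_bot]
    constructor
    · intro hx
      have := congrArg (fun g : ModuleCat.of R M₁ ⟶ F₀ => g ⟨x, hx⟩) hzero
      simpa using this
    · rintro rfl; exact M₁.zero_mem
  refine ⟨uniform, ?_⟩
  intro E i ⟨hinj, himono, hess⟩ M₁ M₂ hcompl
  have hiinj : Function.Injective i := (ModuleCat.mono_iff_injective i).mp himono
  -- via essentiality, if the preimage of M is ⊥ then M = ⊥
  have key : ∀ M : Submodule R E, M.comap i.hom = ⊥ → M = ⊥ := by
    intro M hM
    let g : E ⟶ ModuleCat.of R (E ⧸ M) := ModuleCat.ofHom (Submodule.mkQ M)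
    have : Mono (i ≫ g) := by
      rw [ModuleCat.mono_iff_injective]
      intro x y hxy
      have hx : i x - i y ∈ M := by
        have hxy' : Submodule.Quotient.mk (p := M) (i x) =
            Submodule.Quotient.mk (i y) := hxy
        rwa [Submodule.Quotient.eq] at hxy'
      have : x - y ∈ M.comap i.hom := by
        simpa [map_sub] using hx
      rw [hM, Submodule.mem_bot, sub_eq_zero] at this
      exact this
    have hg : Mono g := hess g this
    have hginj : Function.Injective g := (ModuleCat.mono_iff_injective g).mp hg
    ext x
    simp only [Submodule.mem_bot]
    constructor
    · intro hx
      apply hginj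
      show M.mkQ x = M.mkQ 0
      rw [map_zero, Submodule.mkQ_apply, Submodule.Quotient.mk_eq_zero]
      exact hx
    · rintro rfl; exact M.zero_mem
  -- preimages intersect trivially
  have hdisj : M₁.comap i.hom ⊓ M₂.comap i.hom = ⊥ := by
    ext x
    simp only [Submodule.mem_inf, Submodule.mem_comap, Submodule.mem_bot]
    constructor
    · rintro ⟨h1, h2⟩
      have : i x ∈ M₁ ⊓ M₂ := ⟨h1, h2⟩
      rw [hcompl.inf_eq_bot, Submodule.mem_bot] at this
      apply hiinj
      simpa using this
    · rintro rfl; simp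
  by_cases hc : M₁.comap i.hom = ⊥
  · exact Or.inl (key M₁ hc)
  · right
    apply key M₂
    by_contra hc2
    exact uniform _ _ hc hc2 hdisj

end Paper
end
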